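/- Let v₀ be a nonconstant real analytic function on 𝕋. Then there is a constant c₀ = c₀(v₀) > 0 such that mes{x ∈ 𝕋 : |v₀(x) − E| < δ} < δ^{c₀} for all E ∈ ℝ and all sufficiently small δ > 0. -/

import Mathlib

open MeasureTheory Set

namespace S2Aux

lemma grow {f : ℝ → ℝ} {a b ε : ℝ} (hfd : Differentiable ℝ f)
    (hd : ∀ x ∈ Icc a b, ε ≤ deriv f x) :
    ∀ x ∈ Icc a b, ∀ y ∈ Icc a b, x ≤ y → ε * (y - x) ≤ f y - f x := by
  intro x hx y hy hxy
  exact (convex_Icc a b).mul_sub_le_image_sub_of_le_deriv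
    (hfd.continuous.continuousOn) (hfd.differentiableOn)
    (fun z hz => hd z (interior_subset hz)) x hx y hy hxy

lemma vol_le_of_dist_le {S : Set ℝ} {d : ℝ} (hd : 0 ≤ d)
    (h : ∀ x ∈ S, ∀ y ∈ S, y - x ≤ d) : volume S ≤ ENNReal.ofReal (2 * d) := by
  rcases S.eq_empty_or_nonempty with rfl | ⟨x₀, hx₀⟩
  · simp
  · have hsub : S ⊆ Icc (x₀ - d) (x₀ + d) := by
      intro y hy
      have h1 := h y hy x₀ hx₀
      have h2 := h x₀ hx₀ y hy
      constructor <;> linarith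
    calc volume S ≤ volume (Icc (x₀ - d) (x₀ + d)) := measure_mono hsub
      _ = ENNReal.ofReal (2 * d) := by rw [Real.volume_Icc]; ring_nf

lemma base_signed {f : ℝ → ℝ} (hfd : Differentiable ℝ f) {a b ε δ : ℝ} (E : ℝ)
    (hε : 0 < ε) (hδ : 0 < δ)
    (hd : ∀ x ∈ Icc a b, ε ≤ deriv f x) :
    volume {x ∈ Icc a b | |f x - E| < δ} ≤ ENNReal.ofReal (4 * (δ / ε)) := by
  have h2 : (4 : ℝ) * (δ / ε) = 2 * (2 * (δ / ε)) := by ring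
  rw [h2]
  apply vol_le_of_dist_le (by positivity)
  rintro x ⟨hxI, hxE⟩ y ⟨hyI, hyE⟩
  rcases le_or_gt x y with hxy | hxy
  · have hg := grow hfd hd x hxI y hyI hxy
    have h1 := abs_lt.1 hxE
    have h2 := abs_lt.1 hyE
    have h3 : ε * (y - x) ≤ 2 * δ := by linarith [h1.1, h1.2, h2.1, h2.2]
    rw [mul_comm, ← le_div_iff₀ hε] at h3
    calc y - x ≤ 2 * δ / ε := h3
      _ = 2 * (δ / ε) := by ring
  · have : y - x ≤ 0 := by linarith
    have : 0 ≤ 2 * (δ / ε) := by positivity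
    linarith

lemma step_signed (k : ℕ)
    (IH : ∀ (f : ℝ → ℝ), ContDiff ℝ ⊤ f → ∀ (a b ε δ E : ℝ), 0 < ε → 0 < δ →
      (∀ x ∈ Icc a b, ε ≤ |iteratedDeriv (k + 1) f x|) →
      volume {x ∈ Icc a b | |f x - E| < δ} ≤
        ENNReal.ofReal (4 ^ (k + 1) * (δ / ε) ^ ((1 : ℝ) / (k + 1))))
    (f : ℝ → ℝ) (hf : ContDiff ℝ ⊤ f) (a b ε δ E : ℝ) (hε : 0 < ε) (hδ : 0 < δ)
    (hd : ∀ x ∈ Icc a b, ε ≤ deriv (iteratedDeriv (k + 1) f) x) :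
    volume {x ∈ Icc a b | |f x - E| < δ} ≤
      ENNReal.ofReal (4 ^ (k + 2) * (δ / ε) ^ ((1 : ℝ) / (k + 2))) := by
  set g := iteratedDeriv (k + 1) f with hgdef
  have hgD : Differentiable ℝ g :=
    hf.differentiable_iteratedDeriv (k + 1) (by exact_mod_cast lt_top_iff_ne_top.2 (by simp))
  have hgC : Continuous g := hgD.continuous
  have hgrow := grow hgD hd
  set t : ℝ := δ / ε with htdef
  have ht : 0 < t := by positivity
  have hk1 : (0:ℝ) < (k:ℝ) + 1 := by positivity
  have hk2 : (0:ℝ) < (k:ℝ) + 2 := by positivity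
  set u : ℝ := (1 : ℝ) / ((k:ℝ) + 2) with hudef
  have hu : 0 < u := by positivity
  set ρ : ℝ := ε * t ^ u with hρdef
  have hρ : 0 < ρ := by positivity
  set S := {x ∈ Icc a b | |f x - E| < δ} with hSdef
  set A := {x ∈ Icc a b | g x ≤ -ρ} with hAdef
  set B := {x ∈ Icc a b | ρ ≤ g x} with hBdef
  set T := {x ∈ Icc a b | |g x| < ρ} with hTdef
  -- covering
  have hcover : S ⊆ (S ∩ A) ∪ ((S ∩ B) ∪ (S ∩ T)) := by
    intro x hx
    have hxI : x ∈ Icc a b := hx.1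
    rcases le_or_gt (g x) (-ρ) with h1 | h1
    · exact Or.inl ⟨hx, hxI, h1⟩
    rcases le_or_gt ρ (g x) with h2 | h2
    · exact Or.inr (Or.inl ⟨hx, hxI, h2⟩)
    · exact Or.inr (Or.inr ⟨hx, hxI, abs_lt.2 ⟨by linarith, h2⟩⟩)
  -- bound on A part
  have hApart : volume (S ∩ A) ≤
      ENNReal.ofReal (4 ^ (k + 1) * (δ / ρ) ^ ((1 : ℝ) / (k + 1))) := by
    rcases A.eq_empty_or_nonempty with hAe | hAne
    · rw [hAe, inter_empty]; simp
    · have hAcl : IsClosed A := by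
        have : A = Icc a b ∩ g ⁻¹' (Iic (-ρ)) := by
          ext x; simp [hAdef, and_comm]
        rw [this]
        exact isClosed_Icc.inter (isClosed_Iic.preimage hgC)
      have hAbdd : BddAbove A := ⟨b, fun x hx => hx.1.2⟩
      set c := sSup A with hcdef
      have hcA : c ∈ A := hAcl.csSup_mem hAne hAbdd
      have hsub : S ∩ A ⊆ {x ∈ Icc a c | |f x - E| < δ} := by
        rintro x ⟨hxS, hxA⟩
        exact ⟨⟨hxA.1.1, le_csSup hAbdd hxA⟩, hxS.2⟩
      have hlow : ∀ x ∈ Icc a c, ρ ≤ |iteratedDeriv (k + 1) f x| := by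
        intro x hx
        have hxI : x ∈ Icc a b := ⟨hx.1, le_trans hx.2 hcA.1.2⟩
        have := hgrow x hxI c hcA.1 hx.2
        have hgle : g x ≤ g c := by nlinarith [hε.le, sub_nonneg.2 hx.2]
        have : g x ≤ -ρ := le_trans hgle hcA.2
        exact le_abs.2 (Or.inr (by linarith))
      exact le_trans (measure_mono hsub) (IH f hf a c ρ δ E hρ hδ hlow)
  -- bound on B part
  have hBpart : volume (S ∩ B) ≤
      ENNReal.ofReal (4 ^ (k + 1) * (δ / ρ) ^ ((1 : ℝ) / (k + 1))) := by
    rcases B.eq_empty_or_nonempty with hBe | hBne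
    · rw [hBe, inter_empty]; simp
    · have hBcl : IsClosed B := by
        have : B = Icc a b ∩ g ⁻¹' (Ici ρ) := by
          ext x; simp [hBdef, and_comm]
        rw [this]
        exact isClosed_Icc.inter (isClosed_Ici.preimage hgC)
      have hBbdd : BddBelow B := ⟨a, fun x hx => hx.1.1⟩
      set c := sInf B with hcdef
      have hcB : c ∈ B := hBcl.csInf_mem hBne hBbdd
      have hsub : S ∩ B ⊆ {x ∈ Icc c b | |f x - E| < δ} := by
        rintro x ⟨hxS, hxB⟩
        exact ⟨⟨csInf_le hBbdd hxB, hxB.1.2⟩, hxS.2⟩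
      have hlow : ∀ x ∈ Icc c b, ρ ≤ |iteratedDeriv (k + 1) f x| := by
        intro x hx
        have hxI : x ∈ Icc a b := ⟨le_trans hcB.1.1 hx.1, hx.2⟩
        have := hgrow c hcB.1 x hxI hx.1
        have hgle : g c ≤ g x := by nlinarith [hε.le, sub_nonneg.2 hx.1]
        have : ρ ≤ g x := le_trans hcB.2 hgle
        exact le_abs.2 (Or.inl this)
      exact le_trans (measure_mono hsub) (IH f hf c b ρ δ E hρ hδ hlow)
  -- bound on T part
  have hTpart : volume (S ∩ T) ≤ ENNReal.ofReal (2 * (2 * (ρ / ε))) := by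
    refine le_trans (measure_mono inter_subset_right) (vol_le_of_dist_le (by positivity) ?_)
    rintro x ⟨hxI, hxρ⟩ y ⟨hyI, hyρ⟩
    rcases le_or_gt x y with hxy | hxy
    · have := hgrow x hxI y hyI hxy
      have h1 := abs_lt.1 hxρ
      have h2 := abs_lt.1 hyρ
      have h3 : ε * (y - x) ≤ 2 * ρ := by linarith
      rw [mul_comm, ← le_div_iff₀ hε] at h3
      calc y - x ≤ 2 * ρ / ε := h3
        _ = 2 * (ρ / ε) := by ring
    · have h0 : (0:ℝ) ≤ 2 * (ρ / ε) := by positivity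
      linarith
  -- combine
  have hsum : volume S ≤ volume (S ∩ A) + (volume (S ∩ B) + volume (S ∩ T)) :=
    le_trans (measure_mono hcover)
      (le_trans (measure_union_le _ _) (by gcongr; exact measure_union_le _ _))
  -- arithmetic
  have hδρ : (δ / ρ) ^ ((1 : ℝ) / (k + 1)) = t ^ u := by
    have h1 : δ / ρ = t ^ (1 - u) := by
      rw [hρdef, Real.rpow_sub ht, Real.rpow_one, htdef]
      field_simp
    rw [h1, ← Real.rpow_mul ht.le]
    congr 1
    rw [hudef]
    field_simp
    ring
  have hρε : ρ / ε = t ^ u := by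
    rw [hρdef]; field_simp
  have hreal : 4 ^ (k + 1) * (δ / ρ) ^ ((1 : ℝ) / (k + 1)) +
      (4 ^ (k + 1) * (δ / ρ) ^ ((1 : ℝ) / (k + 1)) + 2 * (2 * (ρ / ε))) ≤
      4 ^ (k + 2) * (δ / ε) ^ ((1 : ℝ) / (k + 2)) := by
    rw [hδρ, hρε, ← htdef, ← hudef]
    have htu : 0 < t ^ u := Real.rpow_pos_of_pos ht u
    have h4 : (4:ℝ) ≤ 4 ^ (k+1) := by
      calc (4:ℝ) = 4 ^ 1 := (pow_one 4).symm
      _ ≤ 4 ^ (k+1) := by gcongr <;> norm_num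
    have : (4:ℝ) ^ (k+2) = 2 * 4 ^ (k+1) + 2 * 4 ^ (k+1) := by ring
    nlinarith [htu.le]
  calc volume S ≤ _ := hsum
    _ ≤ ENNReal.ofReal (4 ^ (k + 1) * (δ / ρ) ^ ((1 : ℝ) / (k + 1))) +
        (ENNReal.ofReal (4 ^ (k + 1) * (δ / ρ) ^ ((1 : ℝ) / (k + 1))) +
         ENNReal.ofReal (2 * (2 * (ρ / ε)))) := by gcongr
    _ = ENNReal.ofReal (4 ^ (k + 1) * (δ / ρ) ^ ((1 : ℝ) / (k + 1)) +
        (4 ^ (k + 1) * (δ / ρ) ^ ((1 : ℝ) / (k + 1)) + 2 * (2 * (ρ / ε)))) := by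
      rw [ENNReal.ofReal_add (by positivity) (by positivity),
        ENNReal.ofReal_add (by positivity) (by positivity)]
    _ ≤ _ := ENNReal.ofReal_le_ofReal hreal

lemma dichotomy {g : ℝ → ℝ} (hg : Continuous g) {a b ε : ℝ} (hε : 0 < ε)
    (h : ∀ x ∈ Icc a b, ε ≤ |g x|) :
    (∀ x ∈ Icc a b, ε ≤ g x) ∨ (∀ x ∈ Icc a b, ε ≤ -g x) := by
  by_contra hc
  push_neg at hc
  obtain ⟨⟨x, hx, hgx⟩, ⟨y, hy, hgy⟩⟩ := hc
  have hgx' : ε ≤ -g x := by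
    rcases le_abs.1 (h x hx) with h' | h'
    · linarith
    · exact h'
  have hgy' : ε ≤ g y := by
    rcases le_abs.1 (h y hy) with h' | h'
    · exact h'
    · linarith
  have hIcc : uIcc x y ⊆ Icc a b := (ordConnected_Icc).uIcc_subset hx hy
  have h0 : (0:ℝ) ∈ uIcc (g x) (g y) := by
    refine mem_uIcc.2 (Or.inl ⟨?_, ?_⟩) <;> linarith
  obtain ⟨z, hz, hz0⟩ := intermediate_value_uIcc (hg.continuousOn) h0
  have := h z (hIcc hz)
  rw [hz0] at this
  simp at this
  linarith

lemma set_neg_eq (f : ℝ → ℝ) (a b δ E : ℝ) :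
    {x ∈ Icc a b | |(fun y => -(f y)) x - (-E)| < δ} = {x ∈ Icc a b | |f x - E| < δ} := by
  ext x
  simp only [Set.mem_setOf_eq]
  rw [show -f x - -E = -(f x - E) from by ring, abs_neg]

lemma sublevel (k : ℕ) : ∀ f : ℝ → ℝ, ContDiff ℝ ⊤ f → ∀ a b ε δ E : ℝ, 0 < ε → 0 < δ →
    (∀ x ∈ Icc a b, ε ≤ |iteratedDeriv (k + 1) f x|) →
    volume {x ∈ Icc a b | |f x - E| < δ} ≤
      ENNReal.ofReal (4 ^ (k + 1) * (δ / ε) ^ ((1 : ℝ) / (k + 1))) := by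
  induction k with
  | zero =>
    intro f hf a b ε δ E hε hδ hd
    have hfd : Differentiable ℝ f := hf.differentiable (by norm_num)
    have hbound : (4:ℝ) * (δ / ε) = 4 ^ (0 + 1) * (δ / ε) ^ ((1 : ℝ) / ((0:ℕ) + 1)) := by
      norm_num
    rcases dichotomy (hf.continuous_iteratedDeriv 1 le_top) hε hd with hpos | hneg
    · rw [← hbound]
      exact base_signed hfd E hε hδ (fun x hx => by
        rw [← iteratedDeriv_one]; exact hpos x hx)
    · rw [← set_neg_eq f a b δ E, ← hbound]
      have hdneg : ∀ x ∈ Icc a b, ε ≤ deriv (fun y => -(f y)) x := by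
        intro x hx
        rw [deriv.fun_neg]
        have := hneg x hx
        rw [iteratedDeriv_one] at this
        linarith
      exact base_signed hfd.neg (-E) hε hδ hdneg
  | succ k IH =>
    intro f hf a b ε δ E hε hδ hd
    have hcast : 4 ^ (k + 1 + 1) * (δ / ε) ^ ((1 : ℝ) / ((k:ℝ) + 1 + 1)) =
        4 ^ (k + 2) * (δ / ε) ^ ((1 : ℝ) / ((k:ℝ) + 2)) := by norm_num [add_assoc]
    have hd' : ∀ x ∈ Icc a b, ε ≤ |deriv (iteratedDeriv (k + 1) f) x| := by
      intro x hx
      rw [← iteratedDeriv_succ]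
      exact hd x hx
    have hcont : Continuous (deriv (iteratedDeriv (k + 1) f)) := by
      rw [← iteratedDeriv_succ]
      exact hf.continuous_iteratedDeriv _ le_top
    rcases dichotomy hcont hε hd' with hpos | hneg
    · refine le_trans (step_signed k IH f hf a b ε δ E hε hδ hpos) (le_of_eq ?_)
      congr 2
      push_cast
      ring
    · rw [← set_neg_eq f a b δ E]
      have hid : iteratedDeriv (k + 1) (fun y => -(f y)) = fun y => -(iteratedDeriv (k+1) f y) := by
        funext y; exact iteratedDeriv_neg (k+1) f y
      have hdneg : ∀ x ∈ Icc a b, ε ≤ deriv (iteratedDeriv (k + 1) (fun y => -(f y))) x := by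
        intro x hx
        rw [hid, deriv.fun_neg]
        linarith [hneg x hx]
      have hstep := step_signed k IH (fun y => -(f y)) hf.neg a b ε δ (-E) hε hδ hdneg
      refine le_trans hstep (le_of_eq ?_)
      congr 2
      push_cast
      ring

lemma exists_deriv_ne (v₀ : ℝ → ℝ) (han : AnalyticOnNhd ℝ v₀ Set.univ)
    (hnc : ∃ x y : ℝ, v₀ x ≠ v₀ y) :
    ∀ x₀ : ℝ, ∃ n : ℕ, 0 < n ∧ iteratedDeriv n v₀ x₀ ≠ 0 := by
  intro x₀
  by_contra hc
  push_neg at hc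
  -- all derivatives vanish at x₀
  have hall : ∀ n : ℕ, 0 < n → iteratedDeriv n v₀ x₀ = 0 := fun n hn => hc n hn
  obtain ⟨p, hp⟩ := han x₀ (mem_univ x₀)
  obtain ⟨r, hpr⟩ := hp
  have hev : v₀ =ᶠ[nhds x₀] fun _ => v₀ x₀ := by
    have hball : Metric.eball x₀ r ∈ nhds x₀ :=
      EMetric.isOpen_ball.mem_nhds (EMetric.mem_ball_self hpr.r_pos)
    filter_upwards [hball] with z hz
    set y := z - x₀ with hy
    have hy' : y ∈ Metric.eball (0:ℝ) r := by
      rw [EMetric.mem_ball] at hz ⊢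
      rw [edist_eq_enorm_sub] at hz ⊢
      simpa using hz
    have hs := hpr.hasSum_iteratedFDeriv hy'
    have hterm : ∀ n : ℕ, n ≠ 0 →
        ((Nat.factorial n : ℝ)⁻¹ • iteratedFDeriv ℝ n v₀ x₀ fun _ => y) = 0 := by
      intro n hn
      have : (iteratedFDeriv ℝ n v₀ x₀ : (Fin n → ℝ) → ℝ) (fun _ => y)
          = (∏ _i : Fin n, y) • iteratedDeriv n v₀ x₀ :=
        iteratedFDeriv_apply_eq_iteratedDeriv_mul_prod
      rw [this, hall n (Nat.pos_of_ne_zero hn)]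
      simp
    have hs0 : HasSum (fun n : ℕ => (Nat.factorial n : ℝ)⁻¹ • iteratedFDeriv ℝ n v₀ x₀ fun _ => y)
        ((Nat.factorial 0 : ℝ)⁻¹ • iteratedFDeriv ℝ 0 v₀ x₀ fun _ => y) :=
      hasSum_single 0 hterm
    have h0 : ((Nat.factorial 0 : ℝ)⁻¹ • iteratedFDeriv ℝ 0 v₀ x₀ fun _ => y) = v₀ x₀ := by
      simp [iteratedFDeriv_zero_apply]
    rw [h0] at hs0
    have := hs.unique hs0
    simpa [hy] using this
  -- identity theorem
  have hz : (fun x => v₀ x - v₀ x₀) =ᶠ[nhds x₀] 0 := by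
    filter_upwards [hev] with z hz
    simp [hz]
  have han2 : AnalyticOnNhd ℝ (fun x => v₀ x - v₀ x₀) Set.univ :=
    han.sub analyticOnNhd_const
  have := han2.eqOn_zero_of_preconnected_of_eventuallyEq_zero
    isPreconnected_univ (mem_univ x₀) hz
  obtain ⟨x, y, hxy⟩ := hnc
  have hx := this (mem_univ x)
  have hy := this (mem_univ y)
  simp only [Pi.zero_apply, sub_eq_zero] at hx hy
  exact hxy (hx.trans hy.symm)

end S2Aux

open S2Aux in
set_option maxHeartbeats 1000000 in
/-- **Łojasiewicz inequality for real analytic functions on the torus**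
(Bourgain, Lemma 7.3).  If `v₀` is a nonconstant real analytic `1`-periodic function
(i.e. a real analytic function on `𝕋 = ℝ/ℤ`), then there is `c₀ = c₀(v₀) > 0` such that
`mes {x ∈ 𝕋 : |v₀ x - E| < δ} < δ ^ c₀` for every `E ∈ ℝ` and all sufficiently small `δ > 0`. -/
theorem statement2 (v₀ : ℝ → ℝ)
    (hper : Function.Periodic v₀ 1)
    (han : AnalyticOnNhd ℝ v₀ Set.univ)
    (hnc : ∃ x y : ℝ, v₀ x ≠ v₀ y) :
    ∃ c₀ > (0 : ℝ), ∃ δ₀ > (0 : ℝ), ∀ E : ℝ, ∀ δ : ℝ, 0 < δ → δ < δ₀ →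
      volume {x ∈ Ico (0 : ℝ) 1 | |v₀ x - E| < δ} < ENNReal.ofReal (δ ^ c₀) := by
  have hCD : ContDiff ℝ ⊤ v₀ := han.contDiff
  -- pointwise local lower bounds
  have hpt : ∀ x : ℝ, ∃ (n : ℕ) (e r : ℝ), 0 < n ∧ 0 < e ∧ 0 < r ∧
      ∀ y ∈ Icc (x - r) (x + r), e ≤ |iteratedDeriv n v₀ y| := by
    intro x
    obtain ⟨n, hn, hnz⟩ := exists_deriv_ne v₀ han hnc x
    set c := |iteratedDeriv n v₀ x| with hc
    have hcpos : 0 < c := abs_pos.2 hnz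
    have hcont : Continuous fun y => |iteratedDeriv n v₀ y| :=
      (hCD.continuous_iteratedDeriv n le_top).abs
    have hU : IsOpen {y : ℝ | c / 2 < |iteratedDeriv n v₀ y|} :=
      isOpen_lt continuous_const hcont
    have hxU : x ∈ {y : ℝ | c / 2 < |iteratedDeriv n v₀ y|} := by
      simp only [mem_setOf_eq, ← hc]; linarith
    obtain ⟨r', hr', hball⟩ := Metric.isOpen_iff.1 hU x hxU
    refine ⟨n, c / 2, r' / 2, hn, by linarith, by linarith, fun y hy => ?_⟩
    have : y ∈ Metric.ball x r' := by
      rw [Metric.mem_ball, Real.dist_eq]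
      have h1 := hy.1; have h2 := hy.2
      rw [abs_lt]; constructor <;> linarith
    exact (hball this).le
  choose n e r h1 h2 h3 h4 using hpt
  -- compactness
  obtain ⟨t, htmem, htcov⟩ := isCompact_Icc.elim_nhds_subcover
    (fun x => Metric.ball x (r x)) (fun x _ => Metric.ball_mem_nhds x (h3 x))
  have h01 : (0:ℝ) ∈ Icc (0:ℝ) 1 := by norm_num
  obtain ⟨x₁, hx₁t, _⟩ := mem_iUnion₂.1 (htcov h01)
  have htne : t.Nonempty := ⟨x₁, hx₁t⟩
  set N := t.sup n with hN
  have hNx : ∀ x ∈ t, n x ≤ N := fun x hx => Finset.le_sup hx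
  have hN1 : 1 ≤ N := le_trans (h1 x₁) (hNx x₁ hx₁t)
  have hNR : (0:ℝ) < (N:ℝ) := by exact_mod_cast Nat.lt_of_lt_of_le Nat.zero_lt_one hN1
  set ε := t.inf' htne e with hε'
  have hε : 0 < ε := (Finset.lt_inf'_iff htne).2 fun x _ => h2 x
  set c₀ : ℝ := 1 / (2 * (N:ℝ)) with hc₀
  have hc₀pos : 0 < c₀ := by positivity
  set M : ℝ := (t.card : ℝ) * 4 ^ N * (ε ^ ((1:ℝ)/(N:ℝ)))⁻¹ with hM
  have htcard : (0:ℝ) < t.card := by exact_mod_cast Finset.card_pos.2 htne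
  have hMpos : 0 < M := by positivity
  set δ₀ : ℝ := min ε ((1/(M+1)) ^ (2*(N:ℝ))) with hδ₀
  have hδ₀pos : 0 < δ₀ := lt_min hε (Real.rpow_pos_of_pos (by positivity) _)
  refine ⟨c₀, hc₀pos, δ₀, hδ₀pos, fun E δ hδ hδδ₀ => ?_⟩
  have hδε : δ / ε ≤ 1 := by
    rw [div_le_one hε]
    exact le_trans hδδ₀.le (min_le_left _ _)
  have hδεpos : 0 < δ / ε := by positivity
  -- covering and per-ball estimate
  set K : ℝ := 4 ^ N * (δ / ε) ^ ((1:ℝ)/(N:ℝ)) with hK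
  have hper' : ∀ x ∈ t, volume {y ∈ Icc (x - r x) (x + r x) | |v₀ y - E| < δ} ≤
      ENNReal.ofReal K := by
    intro x hxt
    obtain ⟨m, hm⟩ : ∃ m, n x = m + 1 := ⟨n x - 1, (Nat.succ_pred_eq_of_pos (h1 x)).symm⟩
    have hεe : ε ≤ e x := Finset.inf'_le e hxt
    have hlow : ∀ y ∈ Icc (x - r x) (x + r x), ε ≤ |iteratedDeriv (m + 1) v₀ y| := by
      intro y hy
      rw [← hm]
      exact le_trans hεe (h4 x y hy)
    refine le_trans (sublevel m v₀ hCD (x - r x) (x + r x) ε δ E hε hδ hlow)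
      (ENNReal.ofReal_le_ofReal ?_)
    rw [hK]
    have hm1 : m + 1 ≤ N := hm ▸ hNx x hxt
    have hpow : (4:ℝ) ^ (m+1) ≤ 4 ^ N := by
      apply pow_le_pow_right₀ (by norm_num) hm1
    have hexp : (δ / ε) ^ ((1:ℝ)/((m:ℝ)+1)) ≤ (δ / ε) ^ ((1:ℝ)/(N:ℝ)) := by
      apply Real.rpow_le_rpow_of_exponent_ge hδεpos hδε
      apply div_le_div_of_nonneg_left (by norm_num) (by positivity)
      exact_mod_cast hm1
    have hrpos : 0 ≤ (δ / ε) ^ ((1:ℝ)/((m:ℝ)+1)) := (Real.rpow_pos_of_pos hδεpos _).le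
    calc (4:ℝ) ^ (m+1) * (δ/ε) ^ ((1:ℝ)/((m:ℝ)+1))
        ≤ 4 ^ N * (δ/ε) ^ ((1:ℝ)/((m:ℝ)+1)) := by gcongr
      _ ≤ 4 ^ N * (δ/ε) ^ ((1:ℝ)/(N:ℝ)) := by
          apply mul_le_mul_of_nonneg_left hexp (by positivity)
  -- total bound
  have hcov : {x ∈ Ico (0:ℝ) 1 | |v₀ x - E| < δ} ⊆
      ⋃ x ∈ t, {y ∈ Icc (x - r x) (x + r x) | |v₀ y - E| < δ} := by
    rintro y ⟨hyI, hyE⟩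
    have hyI' : y ∈ Icc (0:ℝ) 1 := ⟨hyI.1, hyI.2.le⟩
    obtain ⟨x, hxt, hxb⟩ := mem_iUnion₂.1 (htcov hyI')
    refine mem_iUnion₂.2 ⟨x, hxt, ⟨?_, hyE⟩⟩
    rw [Metric.mem_ball, Real.dist_eq, abs_lt] at hxb
    constructor <;> linarith [hxb.1, hxb.2]
  have hvol : volume {x ∈ Ico (0:ℝ) 1 | |v₀ x - E| < δ} ≤
      ENNReal.ofReal ((t.card : ℝ) * K) := by
    calc volume {x ∈ Ico (0:ℝ) 1 | |v₀ x - E| < δ}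
        ≤ volume (⋃ x ∈ t, {y ∈ Icc (x - r x) (x + r x) | |v₀ y - E| < δ}) :=
          measure_mono hcov
      _ ≤ ∑ x ∈ t, volume {y ∈ Icc (x - r x) (x + r x) | |v₀ y - E| < δ} :=
          measure_biUnion_finset_le _ _
      _ ≤ ∑ _x ∈ t, ENNReal.ofReal K := Finset.sum_le_sum hper'
      _ = (t.card : ENNReal) * ENNReal.ofReal K := by
          rw [Finset.sum_const, nsmul_eq_mul]
      _ = ENNReal.ofReal ((t.card : ℝ) * K) := by
          rw [ENNReal.ofReal_mul (Nat.cast_nonneg _), ENNReal.ofReal_natCast]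
  -- final strict inequality
  have hfinal : (t.card : ℝ) * K < δ ^ c₀ := by
    have hδc : 0 < δ ^ c₀ := Real.rpow_pos_of_pos hδ _
    have hsplit : (δ/ε) ^ ((1:ℝ)/(N:ℝ)) = δ ^ ((1:ℝ)/(N:ℝ)) * (ε ^ ((1:ℝ)/(N:ℝ)))⁻¹ := by
      rw [Real.div_rpow hδ.le hε.le, div_eq_mul_inv]
    have hδN : δ ^ ((1:ℝ)/(N:ℝ)) = δ ^ c₀ * δ ^ c₀ := by
      rw [← Real.rpow_add hδ]
      congr 1
      rw [hc₀]
      field_simp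
      ring
    have hMδ : M * δ ^ c₀ < 1 := by
      have hδlt : δ < (1/(M+1)) ^ (2*(N:ℝ)) := lt_of_lt_of_le hδδ₀ (min_le_right _ _)
      have h1M : (0:ℝ) < 1/(M+1) := by positivity
      have : δ ^ c₀ < ((1/(M+1)) ^ (2*(N:ℝ))) ^ c₀ :=
        Real.rpow_lt_rpow hδ.le hδlt hc₀pos
      have heq : ((1/(M+1)) ^ (2*(N:ℝ))) ^ c₀ = 1/(M+1) := by
        rw [← Real.rpow_mul h1M.le]
        rw [show 2*(N:ℝ) * c₀ = 1 from by rw [hc₀]; field_simp]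
        exact Real.rpow_one _
      rw [heq] at this
      calc M * δ ^ c₀ < M * (1/(M+1)) := by
            apply mul_lt_mul_of_pos_left this hMpos
        _ < 1 := by
            rw [mul_one_div, div_lt_one (by linarith : (0:ℝ) < M + 1)]
            linarith
    calc (t.card : ℝ) * K = M * δ ^ ((1:ℝ)/(N:ℝ)) := by
          rw [hK, hM, hsplit]; ring
      _ = (M * δ ^ c₀) * δ ^ c₀ := by rw [hδN]; ring
      _ < 1 * δ ^ c₀ := by apply mul_lt_mul_of_pos_right hMδ hδc
      _ = δ ^ c₀ := one_mul _
  refine lt_of_le_of_lt hvol ?_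
  rw [ENNReal.ofReal_lt_ofReal_iff (Real.rpow_pos_of_pos hδ _)]
  exact hfinal
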